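/- For integers n ≥ 1 and 1 ≤ m ≤ n, define ζ(m, n, q) = Σ_{j=1}^m C(n−1, j−1)(1−q)^(n−j) q^(j−1) for q ∈ [0,1]. Then for every q ∈ (0,1], (1/4)·min{1, m/(n q)} ≤ (1/q)·∫₀^q ζ(m, n, t) dt ≤ min{1, m/(n q)}. -/

import Mathlib

open Finset

/-- `ζ(m, n, q) = Σ_{j=1}^m C(n−1, j−1)(1−q)^(n−j) q^(j−1)`. -/
noncomputable def zetaFun (m n : ℕ) (q : ℝ) : ℝ :=
  ∑ j ∈ Finset.Icc 1 m, ((n - 1).choose (j - 1) : ℝ) * (1 - q) ^ (n - j) * q ^ (j - 1)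

open intervalIntegral

lemma beta_int (k j : ℕ) : ∫ t in (0:ℝ)..1, t^k * (1-t)^j
    = (k.factorial * j.factorial : ℝ) / (k+j+1).factorial := by
  induction j generalizing k with
  | zero =>
    rw [show k + 0 + 1 = k + 1 from rfl, Nat.factorial_succ]
    simp only [pow_zero, mul_one, integral_pow, one_pow]
    push_cast
    rw [zero_pow (by omega), sub_zero]
    have : (0:ℝ) < (k.factorial : ℝ) := by positivity
    field_simp
    simp
  | succ j ih =>
    have hk1 : ((k:ℝ)+1) ≠ 0 := by positivity
    have hu : ∀ x ∈ Set.uIcc (0:ℝ) 1, HasDerivAt (fun t : ℝ => (1-t)^(j+1))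
        (-(((j:ℝ)+1) * (1-x)^j)) x := by
      intro x _
      have h1 : HasDerivAt (fun t : ℝ => 1 - t) (-1) x := by
        simpa using (hasDerivAt_id x).const_sub 1
      have := h1.pow (j+1)
      exact this.congr_deriv (by rw [Nat.add_sub_cancel]; push_cast; ring)
    have hv : ∀ x ∈ Set.uIcc (0:ℝ) 1, HasDerivAt (fun t : ℝ => t^(k+1)/((k:ℝ)+1))
        (x^k) x := by
      intro x _
      have h1 : HasDerivAt (fun t : ℝ => t^(k+1)) (((k:ℝ)+1) * x^k) x := by
        simpa using hasDerivAt_pow (k+1) x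
      have := h1.div_const ((k:ℝ)+1)
      exact this.congr_deriv (mul_div_cancel_left₀ _ hk1)
    have hu' : IntervalIntegrable (fun x : ℝ => -(((j:ℝ)+1) * (1-x)^j)) MeasureTheory.volume 0 1 :=
      (by fun_prop : Continuous fun x : ℝ => -(((j:ℝ)+1) * (1-x)^j)).intervalIntegrable 0 1
    have hv' : IntervalIntegrable (fun x : ℝ => x^k) MeasureTheory.volume 0 1 :=
      (by fun_prop : Continuous fun x : ℝ => x^k).intervalIntegrable 0 1
    have key := integral_mul_deriv_eq_deriv_mul hu hv hu' hv'
    have h2 : (fun x : ℝ => -(((j:ℝ)+1) * (1-x)^j) * (x^(k+1)/((k:ℝ)+1)))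
        = fun x : ℝ => (-((j:ℝ)+1)/((k:ℝ)+1)) * (x^(k+1)*(1-x)^j) := by
      funext x; field_simp
    rw [h2, integral_const_mul, ih (k+1)] at key
    have h3 : ∫ t in (0:ℝ)..1, t^k * (1-t)^(j+1) = ∫ t in (0:ℝ)..1, (1-t)^(j+1) * t^k := by
      simp_rw [mul_comm]
    rw [h3, key]
    have e1 : ((k + (j+1) + 1).factorial : ℝ) = (k+1+j+1).factorial := by norm_num [add_assoc, add_comm, add_left_comm]
    have hfpos : (0:ℝ) < ((k+1+j+1).factorial : ℝ) := by positivity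
    rw [Nat.factorial_succ (k), Nat.factorial_succ j] at *
    push_cast
    rw [e1]
    push_cast
    field_simp
    ring

lemma zeta_eq (m n : ℕ) (q : ℝ) :
    zetaFun m n q = ∑ k ∈ range m, ((n-1).choose k : ℝ) * (1-q)^(n-1-k) * q^k := by
  rw [zetaFun, show Finset.Icc 1 m = Finset.Ico 1 (m+1) by rfl, Finset.sum_Ico_eq_sum_range]
  simp only [Nat.add_sub_cancel]
  refine Finset.sum_congr rfl fun k _ => ?_
  have h1 : 1 + k - 1 = k := by omega
  have h2 : n - (1+k) = n - 1 - k := by omega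
  rw [h1, h2]

lemma binom_sum (N : ℕ) (q : ℝ) :
    ∑ k ∈ range (N+1), (N.choose k : ℝ) * (1-q)^(N-k) * q^k = 1 := by
  have := add_pow q (1-q) N
  rw [add_sub_cancel, one_pow] at this
  conv_rhs => rw [this]
  refine Finset.sum_congr rfl fun k _ => ?_
  ring

lemma zeta_nonneg (m n : ℕ) {t : ℝ} (h0 : 0 ≤ t) (h1 : t ≤ 1) : 0 ≤ zetaFun m n t := by
  rw [zeta_eq]
  refine Finset.sum_nonneg fun k _ => ?_
  have : 0 ≤ 1 - t := by linarith
  positivity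

lemma zeta_le_one (m n : ℕ) (hmn : m ≤ n) {t : ℝ} (h0 : 0 ≤ t) (h1 : t ≤ 1) :
    zetaFun m n t ≤ 1 := by
  rcases Nat.eq_zero_or_pos n with hn | hn
  · have : m = 0 := by omega
    simp [this, zetaFun]
  rw [zeta_eq]
  have hn1 : n - 1 + 1 = n := by omega
  calc ∑ k ∈ range m, ((n-1).choose k : ℝ) * (1-t)^(n-1-k) * t^k
      ≤ ∑ k ∈ range ((n-1)+1), ((n-1).choose k : ℝ) * (1-t)^(n-1-k) * t^k := by
        refine Finset.sum_le_sum_of_subset_of_nonneg (Finset.range_subset_range.2 (by omega))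
          fun k _ _ => ?_
        have : 0 ≤ 1 - t := by linarith
        positivity
    _ = 1 := binom_sum (n-1) t

lemma zeta_markov (m n : ℕ) (hm1 : 1 ≤ m) (hmn : m ≤ n) {t : ℝ} (h0 : 0 ≤ t) (h1 : t ≤ 1) :
    1 - (n : ℝ) * t / m ≤ zetaFun m n t := by
  have ht' : (0:ℝ) ≤ 1 - t := by linarith
  have hmR : (0:ℝ) < m := by exact_mod_cast hm1
  rcases eq_or_lt_of_le hmn with hme | hlt
  · subst hme
    have hone : zetaFun m m t = 1 := by
      have hb := binom_sum (m-1) t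
      rw [show m-1+1 = m by omega] at hb
      rw [zeta_eq, hb]
    rw [hone]
    have : (m:ℝ) * t / m = t := by field_simp
    rw [this]; linarith
  -- m < n, so n ≥ 2
  have hn2 : 2 ≤ n := by omega
  set N := n - 1 with hN
  have hNn : N + 1 = n := by omega
  have hN1 : 1 ≤ N := by omega
  have hfull := binom_sum N t
  rw [zeta_eq]
  -- 1 - sum_{range m} = sum_{Ico m n}
  have hsplit : ∑ k ∈ range m, ((N).choose k : ℝ) * (1-t)^(N-k) * t^k
      + ∑ k ∈ Ico m (N+1), ((N).choose k : ℝ) * (1-t)^(N-k) * t^k = 1 := by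
    rw [Finset.range_eq_Ico]
    rw [Finset.sum_Ico_consecutive _ (by omega : 0 ≤ m) (by omega : m ≤ N+1)]
    rw [← Finset.range_eq_Ico]
    exact hfull
  have key : ∑ k ∈ Ico m (N+1), ((N).choose k : ℝ) * (1-t)^(N-k) * t^k
      ≤ (n : ℝ) * t / m := by
    have step1 : ∀ k ∈ Ico m (N+1), ((N).choose k : ℝ) * (1-t)^(N-k) * t^k
        ≤ ((n:ℝ) * t / m) * (((N-1).choose (k-1) : ℝ) * (1-t)^((N-1)-(k-1)) * t^(k-1)) := by
      intro k hk
      simp only [Finset.mem_Ico] at hk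
      have hk1 : 1 ≤ k := le_trans hm1 hk.1
      have hkN : k ≤ N := by omega
      have hexp : (N-1)-(k-1) = N - k := by omega
      have hid : (N : ℕ) * (N-1).choose (k-1) = N.choose k * k := by
        have := Nat.add_one_mul_choose_eq (N-1) (k-1)
        rw [show (N-1)+1 = N by omega,
          show (k-1)+1 = k by omega] at this
        exact this
      have htk : t^k = t^(k-1) * t := by
        rw [← pow_succ, show (k-1)+1 = k by omega]
      rw [hexp, htk]
      have hkR : (m:ℝ) ≤ k := by exact_mod_cast hk.1
      have hchoose : ((N).choose k : ℝ) * k = (N:ℝ) * ((N-1).choose (k-1) : ℝ) := by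
        exact_mod_cast (congrArg (fun x : ℕ => (x:ℝ)) hid).symm
      have hNle : (N:ℝ) ≤ n := by exact_mod_cast Nat.sub_le n 1
      -- goal: C * (1-t)^(N-k) * (t^(k-1)*t)  ≤ (n t/m) * (C' * (1-t)^(N-k) * t^(k-1))
      rw [div_mul_eq_mul_div, le_div_iff₀ hmR]
      have hnn : (0:ℝ) ≤ ((N-1).choose (k-1) : ℝ) * (1-t)^(N-k) * t^(k-1) := by positivity
      calc ((N).choose k : ℝ) * (1-t)^(N-k) * (t^(k-1) * t) * m
          ≤ ((N).choose k : ℝ) * (1-t)^(N-k) * (t^(k-1) * t) * k := by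
            have : (0:ℝ) ≤ ((N).choose k : ℝ) * (1-t)^(N-k) * (t^(k-1)*t) := by positivity
            exact mul_le_mul_of_nonneg_left hkR this
        _ = (N:ℝ) * ((N-1).choose (k-1) : ℝ) * (1-t)^(N-k) * t^(k-1) * t := by
            rw [show ((N).choose k : ℝ) * (1-t)^(N-k) * (t^(k-1) * t) * k
              = (((N).choose k : ℝ) * k) * (1-t)^(N-k) * t^(k-1) * t by ring, hchoose]
        _ ≤ (n:ℝ) * ((N-1).choose (k-1) : ℝ) * (1-t)^(N-k) * t^(k-1) * t := by
            have h2 : (0:ℝ) ≤ ((N-1).choose (k-1) : ℝ) * (1-t)^(N-k) * t^(k-1) * t := by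
              positivity
            nlinarith [h2]
        _ = (n:ℝ) * t * (((N-1).choose (k-1) : ℝ) * (1-t)^(N-k) * t^(k-1)) := by ring
    calc ∑ k ∈ Ico m (N+1), ((N).choose k : ℝ) * (1-t)^(N-k) * t^k
        ≤ ∑ k ∈ Ico m (N+1), ((n:ℝ) * t / m) * (((N-1).choose (k-1) : ℝ) * (1-t)^((N-1)-(k-1)) * t^(k-1)) :=
          Finset.sum_le_sum step1
      _ = ((n:ℝ) * t / m) * ∑ k ∈ Ico m (N+1), (((N-1).choose (k-1) : ℝ) * (1-t)^((N-1)-(k-1)) * t^(k-1)) := by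
          rw [Finset.mul_sum]
      _ ≤ ((n:ℝ) * t / m) * 1 := by
          refine mul_le_mul_of_nonneg_left ?_ (by positivity)
          have hre : ∑ k ∈ Ico m (N+1), (((N-1).choose (k-1) : ℝ) * (1-t)^((N-1)-(k-1)) * t^(k-1))
              = ∑ j ∈ Ico (m-1) N, (((N-1).choose j : ℝ) * (1-t)^((N-1)-j) * t^j) := by
            rw [Finset.sum_Ico_eq_sum_range, Finset.sum_Ico_eq_sum_range]
            rw [show N - (m-1) = N + 1 - m by omega]
            refine Finset.sum_congr rfl fun i _ => ?_
            rw [show m + i - 1 = m - 1 + i by omega]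
          rw [hre]
          have hb : ∑ j ∈ range N, (((N-1).choose j : ℝ) * (1-t)^((N-1)-j) * t^j) = 1 := by
            have := binom_sum (N-1) t
            rw [show N-1+1 = N by omega] at this
            exact this
          refine le_trans (Finset.sum_le_sum_of_subset_of_nonneg ?_ fun k _ _ => by positivity) hb.le
          rw [Finset.range_eq_Ico]
          exact Finset.Ico_subset_Ico (by omega) le_rfl
      _ = (n:ℝ) * t / m := mul_one _
  linarith [hsplit, key]

lemma zeta_cont (m n : ℕ) : Continuous (zetaFun m n) := by
  unfold zetaFun
  exact continuous_finset_sum _ fun j _ => by fun_prop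

lemma zeta_intble (m n : ℕ) (a b : ℝ) :
    IntervalIntegrable (zetaFun m n) MeasureTheory.volume a b :=
  (zeta_cont m n).intervalIntegrable a b

lemma zeta_int_one (m n : ℕ) (hm1 : 1 ≤ m) (hmn : m ≤ n) :
    ∫ t in (0:ℝ)..1, zetaFun m n t = (m : ℝ) / n := by
  have hn : 1 ≤ n := le_trans hm1 hmn
  have h1 : ∫ t in (0:ℝ)..1, zetaFun m n t
      = ∑ k ∈ range m, ∫ t in (0:ℝ)..1, ((n-1).choose k : ℝ) * (1-t)^(n-1-k) * t^k := by
    rw [← intervalIntegral.integral_finset_sum (fun k _ =>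
      ((by fun_prop : Continuous fun t : ℝ => ((n-1).choose k : ℝ) * (1-t)^(n-1-k) * t^k).intervalIntegrable 0 1))]
    simp_rw [← zeta_eq]
  rw [h1]
  have h2 : ∀ k ∈ range m, (∫ t in (0:ℝ)..1, ((n-1).choose k : ℝ) * (1-t)^(n-1-k) * t^k)
      = 1 / (n : ℝ) := by
    intro k hk
    simp only [Finset.mem_range] at hk
    have hkN : k ≤ n - 1 := by omega
    have : (fun t : ℝ => ((n-1).choose k : ℝ) * (1-t)^(n-1-k) * t^k)
        = fun t : ℝ => ((n-1).choose k : ℝ) * (t^k * (1-t)^(n-1-k)) := by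
      funext t; ring
    rw [this, intervalIntegral.integral_const_mul, beta_int]
    have hfact : (n-1).choose k * k.factorial * (n-1-k).factorial = (n-1).factorial :=
      Nat.choose_mul_factorial_mul_factorial hkN
    have hidx : k + (n-1-k) + 1 = n := by omega
    rw [hidx]
    have hnfact : (n.factorial : ℝ) = n * (n-1).factorial := by
      have := Nat.factorial_succ (n-1)
      rw [show n-1+1 = n by omega] at this
      exact_mod_cast this
    rw [hnfact, ← hfact]
    have c1 : (0:ℝ) < (k.factorial : ℝ) := by positivity
    have c2 : (0:ℝ) < ((n-1-k).factorial : ℝ) := by positivity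
    have c3 : (0:ℝ) < (n:ℝ) := by exact_mod_cast hn
    have c4 : (0:ℝ) < ((n-1).choose k : ℝ) := by
      exact_mod_cast Nat.choose_pos hkN
    push_cast
    field_simp
  rw [Finset.sum_congr rfl h2]
  simp
  ring

theorem stmt_7 (n m : ℕ) (hn : 1 ≤ n) (hm1 : 1 ≤ m) (hmn : m ≤ n)
    (q : ℝ) (hq0 : 0 < q) (hq1 : q ≤ 1) :
    (1 / 4) * min 1 ((m : ℝ) / (n * q)) ≤ (1 / q) * ∫ t in (0:ℝ)..q, zetaFun m n t
      ∧ (1 / q) * ∫ t in (0:ℝ)..q, zetaFun m n t ≤ min 1 ((m : ℝ) / (n * q)) := by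
  have hnR : (0:ℝ) < n := by exact_mod_cast hn
  have hmR : (0:ℝ) < m := by exact_mod_cast hm1
  set I := ∫ t in (0:ℝ)..q, zetaFun m n t with hI
  -- upper bounds
  have hI_le_q : I ≤ q := by
    calc I ≤ ∫ _ in (0:ℝ)..q, (1:ℝ) := by
          refine intervalIntegral.integral_mono_on hq0.le (zeta_intble m n 0 q)
            (intervalIntegrable_const) fun t ht => ?_
          exact zeta_le_one m n hmn ht.1 (le_trans ht.2 hq1)
      _ = q := by simp
  have hI_le_mn : I ≤ (m:ℝ)/n := by
    have hadd : I + (∫ t in q..(1:ℝ), zetaFun m n t) = ∫ t in (0:ℝ)..1, zetaFun m n t :=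
      intervalIntegral.integral_add_adjacent_intervals (zeta_intble m n 0 q) (zeta_intble m n q 1)
    have htail : 0 ≤ ∫ t in q..(1:ℝ), zetaFun m n t :=
      intervalIntegral.integral_nonneg hq1 fun t ht =>
        zeta_nonneg m n (le_trans hq0.le ht.1) ht.2
    rw [zeta_int_one m n hm1 hmn] at hadd
    linarith
  -- lower bound
  set r := min q ((m:ℝ)/n) with hr
  have hr0 : 0 < r := lt_min hq0 (by positivity)
  have hrq : r ≤ q := min_le_left _ _
  have hrm : r ≤ (m:ℝ)/n := min_le_right _ _
  have hnrm : (n:ℝ) * r ≤ m := by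
    calc (n:ℝ) * r ≤ (n:ℝ) * ((m:ℝ)/n) := by nlinarith
      _ = m := by field_simp
  have hIr : ∫ t in (0:ℝ)..r, zetaFun m n t ≤ I := by
    have hadd : (∫ t in (0:ℝ)..r, zetaFun m n t) + (∫ t in r..q, zetaFun m n t) = I :=
      intervalIntegral.integral_add_adjacent_intervals (zeta_intble m n 0 r) (zeta_intble m n r q)
    have htail : 0 ≤ ∫ t in r..q, zetaFun m n t :=
      intervalIntegral.integral_nonneg hrq fun t ht =>
        zeta_nonneg m n (le_trans hr0.le ht.1) (le_trans ht.2 hq1)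
    linarith
  have hlin : ∫ t in (0:ℝ)..r, (1 - (n:ℝ)*t/m) = r - (n:ℝ)*r^2/(2*m) := by
    have heq : (fun t : ℝ => 1 - (n:ℝ)*t/m) = fun t : ℝ => 1 - ((n:ℝ)/m)*t := by
      funext t; ring
    rw [heq, intervalIntegral.integral_sub intervalIntegrable_const
      (((by fun_prop : Continuous fun t : ℝ => ((n:ℝ)/m)*t)).intervalIntegrable 0 r),
      intervalIntegral.integral_const_mul, integral_id, intervalIntegral.integral_const]
    field_simp
    ring
  have hlow : r/2 ≤ ∫ t in (0:ℝ)..r, zetaFun m n t := by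
    have hmono : ∫ t in (0:ℝ)..r, (1 - (n:ℝ)*t/m) ≤ ∫ t in (0:ℝ)..r, zetaFun m n t := by
      refine intervalIntegral.integral_mono_on hr0.le
        (((by fun_prop : Continuous fun t : ℝ => 1 - (n:ℝ)*t/m)).intervalIntegrable 0 r)
        (zeta_intble m n 0 r) fun t ht => ?_
      exact zeta_markov m n hm1 hmn ht.1 (le_trans ht.2 (le_trans hrm (by
        rw [div_le_one hnR]; exact_mod_cast hmn)))
    rw [hlin] at hmono
    have h2 : (n:ℝ)*r^2/(2*m) ≤ r/2 := by
      rw [div_le_div_iff₀ (by positivity) (by norm_num : (0:ℝ) < 2)]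
      nlinarith [mul_le_mul_of_nonneg_right hnrm hr0.le]
    linarith
  have hIr2 : r/2 ≤ I := le_trans hlow hIr
  have hminq : min 1 ((m : ℝ) / (n * q)) = r / q := by
    rw [show (m:ℝ)/(n*q) = ((m:ℝ)/n)/q by rw [div_div],
      show (1:ℝ) = q/q from (div_self hq0.ne').symm, min_div_div_right hq0.le]
  constructor
  · rw [hminq]
    calc (1/4) * (r/q) = (1/q) * (r/4) := by ring
      _ ≤ (1/q) * (r/2) := by
          refine mul_le_mul_of_nonneg_left (by linarith) (by positivity)
      _ ≤ (1/q) * I := mul_le_mul_of_nonneg_left hIr2 (by positivity)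
  · refine le_min ?_ ?_
    · calc (1/q) * I ≤ (1/q) * q := mul_le_mul_of_nonneg_left hI_le_q (by positivity)
        _ = 1 := by field_simp
    · calc (1/q) * I ≤ (1/q) * ((m:ℝ)/n) := mul_le_mul_of_nonneg_left hI_le_mn (by positivity)
        _ = (m:ℝ)/(n*q) := by rw [one_div, inv_mul_eq_div, div_div]
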